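/- Suppose H : X → X̃ is a uniformly continuous bijection between metric spaces intertwining semiflows φ on X and φ̃ on X̃ (i.e., φ̃_t ∘ H = H ∘ φ_t for all t ≥ 0). Then ĥ_s(φ̃) ≤ ĥ_s(φ) and ĥ_r(φ̃) ≤ ĥ_r(φ). -/

import Mathlib

open Set Filter
open scoped ENNReal NNReal Classical Real


open Set Filter

variable {α : Type*}

/-- A (not necessarily continuous) semiflow on `α`, parameterized by nonnegative real times. -/
def IsSemiflow (φ : ℝ → α → α) : Prop :=
  (∀ x, φ 0 x = x) ∧ ∀ s t : ℝ, 0 ≤ s → 0 ≤ t → ∀ x, φ (s + t) x = φ s (φ t x)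

/-- A continuous semiflow. -/
def IsContSemiflow [TopologicalSpace α] (φ : ℝ → α → α) : Prop :=
  IsSemiflow φ ∧ ContinuousOn (fun p : ℝ × α => φ p.1 p.2) (Set.Ici 0 ×ˢ Set.univ)

/-- The pseudosemimetric `d_δ^φ(x,y) = inf { d(φ_s x, φ_s y) : s ∈ [0,δ) }`. -/
noncomputable def dDelta (d : α → α → ℝ) (φ : ℝ → α → α) (δ : ℝ) (x y : α) : ℝ :=
  sInf ((fun s => d (φ s x) (φ s y)) '' Set.Ico 0 δ)

/-- The modified dynamical ball `B̂(x,φ,T,ε,δ)`. -/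
def ballHat (d : α → α → ℝ) (φ : ℝ → α → α) (T ε δ : ℝ) (x : α) : Set α :=
  {y | ∀ t ∈ Set.Icc (0:ℝ) T, dDelta d φ δ (φ t x) (φ t y) < ε}

/-- The classical Bowen dynamical ball `B(x,φ,T,ε)`. -/
def ballB (d : α → α → ℝ) (φ : ℝ → α → α) (T ε : ℝ) (x : α) : Set α :=
  {y | ∀ t ∈ Set.Icc (0:ℝ) T, d (φ t x) (φ t y) < ε}

/-- `(φ,T,ε,δ)`-separated set. -/
def sepHat (d : α → α → ℝ) (φ : ℝ → α → α) (T ε δ : ℝ) (E : Set α) : Prop :=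
  ∀ x ∈ E, E ∩ ballHat d φ T ε δ x = {x}

/-- `(φ,T,ε,δ)`-spanning set for the subset `S`. -/
def spanHat (d : α → α → ℝ) (φ : ℝ → α → α) (S : Set α) (T ε δ : ℝ) (F : Set α) : Prop :=
  F ⊆ S ∧ S ⊆ ⋃ y ∈ F, ballHat d φ T ε δ y

/-- Classical `(φ,T,ε)`-separated set. -/
def sepB (d : α → α → ℝ) (φ : ℝ → α → α) (T ε : ℝ) (E : Set α) : Prop :=
  ∀ x ∈ E, E ∩ ballB d φ T ε x = {x}

/-- Classical `(φ,T,ε)`-spanning set for the subset `S`. -/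
def spanB (d : α → α → ℝ) (φ : ℝ → α → α) (S : Set α) (T ε : ℝ) (F : Set α) : Prop :=
  F ⊆ S ∧ S ⊆ ⋃ y ∈ F, ballB d φ T ε y

/-- `ŝ(φ,T,ε,δ)`: sup of cardinalities of separated subsets of `S`. -/
noncomputable def sHat (d : α → α → ℝ) (φ : ℝ → α → α) (S : Set α) (T ε δ : ℝ) : ℕ∞ :=
  ⨆ (E : Set α) (_ : E ⊆ S ∧ sepHat d φ T ε δ E), E.encard

/-- `r̂(φ,T,ε,δ)`: inf of cardinalities of spanning sets. -/
noncomputable def rHat (d : α → α → ℝ) (φ : ℝ → α → α) (S : Set α) (T ε δ : ℝ) : ℕ∞ :=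
  ⨅ (F : Set α) (_ : spanHat d φ S T ε δ F), F.encard

noncomputable def sB (d : α → α → ℝ) (φ : ℝ → α → α) (S : Set α) (T ε : ℝ) : ℕ∞ :=
  ⨆ (E : Set α) (_ : E ⊆ S ∧ sepB d φ T ε E), E.encard

noncomputable def rB (d : α → α → ℝ) (φ : ℝ → α → α) (S : Set α) (T ε : ℝ) : ℕ∞ :=
  ⨅ (F : Set α) (_ : spanB d φ S T ε F), F.encard

/-- Extended logarithm on `ℕ∞`, with `log ∞ = ∞` and `log 0 = -∞`. -/
noncomputable def elog (x : ℕ∞) : EReal :=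
  if x = ⊤ then ⊤ else if x = 0 then ⊥ else ((Real.log (x.toNat : ℝ) : ℝ) : EReal)

/-- Exponential growth rate `limsup_{T→∞} (1/T) log f(T)`. -/
noncomputable def rate (f : ℝ → ℕ∞) : EReal :=
  Filter.limsup (fun T : ℝ => ((T⁻¹ : ℝ) : EReal) * elog (f T)) Filter.atTop

/-- The modified separated-set entropy `ĥ_s(φ)` (on the subset `S`); since the quantities are
monotone in `ε` and `δ`, the limits `ε → 0⁺`, `δ → 0⁺` are suprema. -/
noncomputable def hHatS (d : α → α → ℝ) (φ : ℝ → α → α) (S : Set α) : EReal :=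
  ⨆ (δ : ℝ) (_ : 0 < δ) (ε : ℝ) (_ : 0 < ε), rate (fun T => sHat d φ S T ε δ)

/-- The modified spanning-set entropy `ĥ_r(φ)`. -/
noncomputable def hHatR (d : α → α → ℝ) (φ : ℝ → α → α) (S : Set α) : EReal :=
  ⨆ (δ : ℝ) (_ : 0 < δ) (ε : ℝ) (_ : 0 < ε), rate (fun T => rHat d φ S T ε δ)

/-- Bowen's classical separated-set entropy `h_s(φ)`. -/
noncomputable def hSB (d : α → α → ℝ) (φ : ℝ → α → α) (S : Set α) : EReal :=
  ⨆ (ε : ℝ) (_ : 0 < ε), rate (fun T => sB d φ S T ε)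

/-- Bowen's classical spanning-set entropy `h_r(φ)`. -/
noncomputable def hRB (d : α → α → ℝ) (φ : ℝ → α → α) (S : Set α) : EReal :=
  ⨆ (ε : ℝ) (_ : 0 < ε), rate (fun T => rB d φ S T ε)



section Aux

lemma elog_mono : Monotone elog := by
  intro x y h
  unfold elog
  rcases eq_or_ne y ⊤ with hy | hy
  · simp [hy]
  · have hx : x ≠ ⊤ := fun hx => hy (top_le_iff.mp (hx ▸ h))
    rw [if_neg hx, if_neg hy]
    rcases eq_or_ne x 0 with h0 | h0
    · simp [h0]
    · have hy0 : y ≠ 0 := by rintro rfl; exact h0 (le_antisymm h zero_le)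
      rw [if_neg h0, if_neg hy0]
      have hxp : 0 < x.toNat := Nat.pos_of_ne_zero
        (fun hz => (ENat.toNat_eq_zero.mp hz).elim h0 hx)
      have hle : x.toNat ≤ y.toNat := ENat.toNat_le_toNat h hy
      exact EReal.coe_le_coe_iff.mpr
        (Real.log_le_log (by exact_mod_cast hxp) (by exact_mod_cast hle))

lemma rate_mono {f g : ℝ → ℕ∞} (h : ∀ T, f T ≤ g T) : rate f ≤ rate g := by
  apply Filter.limsup_le_limsup
  · filter_upwards [Filter.eventually_ge_atTop (0:ℝ)] with T hT
    have hc : (0:EReal) ≤ ((T⁻¹ : ℝ) : EReal) := by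
      exact_mod_cast inv_nonneg.mpr hT
    exact mul_le_mul_of_nonneg_left (elog_mono (h T)) hc
  · exact Filter.isCoboundedUnder_le_of_le _ (fun _ => bot_le)
  · exact ⟨⊤, Filter.Eventually.of_forall (fun _ => le_top)⟩

lemma dDelta_self {α : Type*} [MetricSpace α] (φ : ℝ → α → α) {δ : ℝ} (hδ : 0 < δ) (x : α) :
    dDelta dist φ δ x x = 0 := by
  unfold dDelta
  apply le_antisymm
  · exact csInf_le ⟨0, by rintro _ ⟨s, _, rfl⟩; exact dist_nonneg⟩
      ⟨0, ⟨le_refl 0, hδ⟩, dist_self _⟩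
  · exact le_csInf ⟨_, ⟨0, ⟨le_refl 0, hδ⟩, rfl⟩⟩
      (by rintro _ ⟨s, _, rfl⟩; exact dist_nonneg)

lemma mem_ballHat_self {α : Type*} [MetricSpace α] (φ : ℝ → α → α) {T ε δ : ℝ}
    (hδ : 0 < δ) (hε : 0 < ε) (x : α) : x ∈ ballHat dist φ T ε δ x := by
  intro t _
  rw [dDelta_self φ hδ]
  exact hε

end Aux

/-- If `H : X → X̃` is a uniformly continuous bijection intertwining the
semiflows `φ` and `φ̃`, then `ĥ_s(φ̃) ≤ ĥ_s(φ)` and `ĥ_r(φ̃) ≤ ĥ_r(φ)`. -/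
theorem stmt10 {X Y : Type*} [MetricSpace X] [MetricSpace Y]
    (φ : ℝ → X → X) (ψ : ℝ → Y → Y) (hφ : IsSemiflow φ) (hψ : IsSemiflow ψ)
    (H : X → Y) (hbij : Function.Bijective H) (huc : UniformContinuous H)
    (hconj : ∀ t : ℝ, 0 ≤ t → ∀ x : X, ψ t (H x) = H (φ t x)) :
    hHatS dist ψ Set.univ ≤ hHatS dist φ Set.univ ∧
    hHatR dist ψ Set.univ ≤ hHatR dist φ Set.univ := by
    -- key mapping lemma
  have key : ∀ ε > (0:ℝ), ∀ η > (0:ℝ),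
      (∀ a b : X, dist a b < η → dist (H a) (H b) < ε) →
      ∀ δ > (0:ℝ), ∀ T : ℝ, ∀ x y : X,
      y ∈ ballHat dist φ T η δ x → H y ∈ ballHat dist ψ T ε δ (H x) := by
    intro ε hε η hη hmod δ hδ T x y hy t ht
    have hlt : dDelta dist φ δ (φ t x) (φ t y) < η := hy t ht
    have hne : ((fun s => dist (φ s (φ t x)) (φ s (φ t y))) '' Set.Ico 0 δ).Nonempty :=
      ⟨_, ⟨0, ⟨le_refl 0, hδ⟩, rfl⟩⟩
    obtain ⟨_, ⟨s, hs, rfl⟩, hsd⟩ := exists_lt_of_csInf_lt hne hlt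
    have hdH : dist (H (φ s (φ t x))) (H (φ s (φ t y))) < ε := hmod _ _ hsd
    have hrw : ∀ z : X, ψ s (ψ t (H z)) = H (φ s (φ t z)) := by
      intro z
      rw [hconj t ht.1 z, hconj s hs.1 (φ t z)]
    have hmem : dist (ψ s (ψ t (H x))) (ψ s (ψ t (H y)))
        ∈ (fun s' => dist (ψ s' (ψ t (H x))) (ψ s' (ψ t (H y)))) '' Set.Ico 0 δ :=
      ⟨s, hs, rfl⟩
    have hbdd : BddBelow ((fun s' => dist (ψ s' (ψ t (H x))) (ψ s' (ψ t (H y)))) ''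
        Set.Ico 0 δ) := ⟨0, by rintro _ ⟨u, _, rfl⟩; exact dist_nonneg⟩
    calc dDelta dist ψ δ (ψ t (H x)) (ψ t (H y))
        ≤ dist (ψ s (ψ t (H x))) (ψ s (ψ t (H y))) := csInf_le hbdd hmem
      _ < ε := by rw [hrw x, hrw y]; exact hdH
  constructor
  · -- separated
    apply iSup₂_le; intro δ hδ
    apply iSup₂_le; intro ε hε
    obtain ⟨η, hη, hmod⟩ := Metric.uniformContinuous_iff.mp huc ε hε
    have hmod' : ∀ a b : X, dist a b < η → dist (H a) (H b) < ε := fun a b h => hmod h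
    have hpt : ∀ T, sHat dist ψ Set.univ T ε δ ≤ sHat dist φ Set.univ T η δ := by
      intro T
      apply iSup₂_le; intro E hE
      have hsep : sepHat dist φ T η δ (H ⁻¹' E) := by
        intro x hx
        ext y
        simp only [Set.mem_inter_iff, Set.mem_singleton_iff]
        constructor
        · rintro ⟨hyE, hyball⟩
          have hHy : H y ∈ E ∩ ballHat dist ψ T ε δ (H x) :=
            ⟨hyE, key ε hε η hη hmod' δ hδ T x y hyball⟩
          rw [hE.2 (H x) hx] at hHy
          exact hbij.1 hHy
        · rintro rfl
          exact ⟨hx, mem_ballHat_self φ hδ hη _⟩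
      have hcard : E.encard = (H ⁻¹' E).encard := by
        conv_lhs => rw [← Set.image_preimage_eq E hbij.2]
        exact (hbij.1.injOn).encard_image
      rw [hcard]
      exact le_iSup₂_of_le (H ⁻¹' E) ⟨Set.subset_univ _, hsep⟩ le_rfl
    exact le_iSup_of_le δ (le_iSup_of_le hδ (le_iSup_of_le η (le_iSup_of_le hη
      (rate_mono hpt))))
  · -- spanning
    apply iSup₂_le; intro δ hδ
    apply iSup₂_le; intro ε hε
    obtain ⟨η, hη, hmod⟩ := Metric.uniformContinuous_iff.mp huc ε hε
    have hmod' : ∀ a b : X, dist a b < η → dist (H a) (H b) < ε := fun a b h => hmod h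
    have hpt : ∀ T, rHat dist ψ Set.univ T ε δ ≤ rHat dist φ Set.univ T η δ := by
      intro T
      apply le_iInf₂; intro F hF
      have hspan : spanHat dist ψ Set.univ T ε δ (H '' F) := by
        refine ⟨Set.subset_univ _, ?_⟩
        intro z _
        obtain ⟨x, rfl⟩ := hbij.2 z
        have hx := hF.2 (Set.mem_univ x)
        obtain ⟨f, hf, hxf⟩ := Set.mem_iUnion₂.mp hx
        exact Set.mem_iUnion₂.mpr ⟨H f, Set.mem_image_of_mem H hf,
          key ε hε η hη hmod' δ hδ T f x hxf⟩
      calc rHat dist ψ Set.univ T ε δ ≤ (H '' F).encard := iInf₂_le (H '' F) hspan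
        _ ≤ F.encard := Set.encard_image_le H F
    exact le_iSup_of_le δ (le_iSup_of_le hδ (le_iSup_of_le η (le_iSup_of_le hη
      (rate_mono hpt))))
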